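/- arXiv:2511.21063 — 6 statements merged into one kernel-verified Lean document; each statement's English description precedes it below -/
import Mathlib

section
/- For all x, y ∈ [-1,1], one has (4/π²)(x−y)² ≤ ((2/π)arcsin(x) − (2/π)arcsin(y))² ≤ (4/π²)(x−y)² + 2(1 − 4/π²)(x⁴ + y⁴). -/
open Real

set_option maxHeartbeats 1000000 in
/-- Key lemma: arcsin t <= t + (pi/2 - 1) t^3 on [0,1]. -/
lemma arcsin_le_cubic {t : ℝ} (h0 : 0 ≤ t) (h1 : t ≤ 1) :
    arcsin t ≤ t + (π / 2 - 1) * t ^ 3 := by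
  obtain ⟨c, hc_def⟩ : ∃ c : ℝ, c = π / 2 - 1 := ⟨_, rfl⟩
  have hπ := pi_gt_d6
  have hπ' := pi_lt_d2
  have hc0 : (1:ℝ)/2 < c := by rw [hc_def]; linarith
  have hc1 : c < 2/3 := by rw [hc_def]; linarith
  obtain ⟨q, hq_def⟩ : ∃ q : ℝ → ℝ,
      q = fun v => -9*c^2*v^2 + (9*c^2 - 6*c)*v + (6*c - 1) := ⟨_, rfl⟩
  have hq0 : 0 < q 0 := by rw [hq_def]; simp; nlinarith
  have hq1 : q 1 < 0 := by rw [hq_def]; simp; nlinarith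
  obtain ⟨v, hv, hqv⟩ : ∃ v ∈ Set.Icc (0:ℝ) 1, q v = 0 := by
    have hqcont : ContinuousOn q (Set.Icc (0:ℝ) 1) := by rw [hq_def]; fun_prop
    exact intermediate_value_Icc' (by norm_num : (0:ℝ) ≤ 1) hqcont
      (Set.mem_Icc.2 ⟨hq1.le, hq0.le⟩)
  obtain ⟨h, hh_def⟩ : ∃ h : ℝ → ℝ, h = fun θ => c * sin θ ^ 3 - θ + sin θ := ⟨_, rfl⟩
  have hderiv : ∀ θ : ℝ, HasDerivAt h (cos θ * (1 + 3*c*(sin θ)^2) - 1) θ := by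
    intro θ
    have hd1 : HasDerivAt (fun θ : ℝ => sin θ ^ 3) (3 * sin θ ^ 2 * cos θ) θ := by
      simpa using ((hasDerivAt_sin θ).fun_pow 3)
    have hd2 : HasDerivAt (fun θ : ℝ => c * sin θ ^ 3 - θ + sin θ)
        (c * (3 * sin θ ^ 2 * cos θ) - 1 + cos θ) θ :=
      ((hd1.const_mul c).sub (hasDerivAt_id θ)).add (hasDerivAt_sin θ)
    rw [hh_def]
    convert hd2 using 1
    ring
  have hdiff : Differentiable ℝ h := fun θ => (hderiv θ).differentiableAt
  obtain ⟨θs, hθs_def⟩ : ∃ θs : ℝ, θs = arcsin (Real.sqrt v) := ⟨_, rfl⟩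
  have hθs0 : 0 ≤ θs := by rw [hθs_def]; exact arcsin_nonneg.2 (Real.sqrt_nonneg v)
  have hθs2 : θs ≤ π / 2 := by rw [hθs_def]; exact arcsin_le_pi_div_two _
  have hsv : sin θs = Real.sqrt v := by
    rw [hθs_def]
    exact sin_arcsin (le_trans (by norm_num) (Real.sqrt_nonneg v)) (Real.sqrt_le_one.2 hv.2)
  have hsv2 : sin θs ^ 2 = v := by rw [hsv]; exact Real.sq_sqrt hv.1
  have key_pos : ∀ θ ∈ Set.Icc 0 θs, 0 ≤ cos θ * (1 + 3*c*(sin θ)^2) - 1 := by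
    rintro θ ⟨hθ0, hθ1⟩
    have hθpi : θ ≤ π / 2 := hθ1.trans hθs2
    have hsθ0 : 0 ≤ sin θ := sin_nonneg_of_nonneg_of_le_pi hθ0 (by linarith)
    have hsle : sin θ ≤ sin θs := by
      rcases eq_or_lt_of_le hθ1 with rfl | hlt
      · exact le_rfl
      · exact (strictMonoOn_sin ⟨by linarith, hθpi⟩ ⟨by linarith, hθs2⟩ hlt).le
    have hw : sin θ ^ 2 ≤ v := by nlinarith
    have hw0 : 0 ≤ sin θ ^ 2 := sq_nonneg _
    have hqw : 0 ≤ q (sin θ ^ 2) := by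
      have hdif : q (sin θ ^ 2) - q v
          = (v - sin θ ^ 2) * (9*c^2*(v + sin θ ^ 2) + 6*c - 9*c^2) := by
        rw [hq_def]; ring
      have hbr : (0:ℝ) ≤ 9*c^2*(v + sin θ ^ 2) + 6*c - 9*c^2 := by nlinarith [hv.1]
      have hpr := mul_nonneg (by linarith : (0:ℝ) ≤ v - sin θ ^ 2) hbr
      linarith
    have hcos2 : cos θ ^ 2 = 1 - sin θ ^ 2 := by
      have := sin_sq_add_cos_sq θ; linarith
    have hcos0 : 0 ≤ cos θ := cos_nonneg_of_mem_Icc ⟨by linarith, hθpi⟩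
    have hone : 1 ≤ (1 - sin θ ^ 2) * (1 + 3*c*(sin θ ^ 2))^2 := by
      have hexp : (1 - sin θ ^ 2) * (1 + 3*c*(sin θ ^ 2))^2 - 1
          = (sin θ ^ 2) * q (sin θ ^ 2) := by rw [hq_def]; ring
      have := mul_nonneg hw0 hqw
      linarith
    have hA2 : (cos θ * (1 + 3*c*(sin θ ^ 2)))^2 = (1 - sin θ ^ 2) * (1 + 3*c*(sin θ ^ 2))^2 := by
      rw [mul_pow, hcos2]
    have hA0 : 0 ≤ cos θ * (1 + 3*c*(sin θ ^ 2)) :=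
      mul_nonneg hcos0 (by nlinarith : (0:ℝ) ≤ 1 + 3*c*(sin θ ^ 2))
    nlinarith [hA2, hA0, hone]
  have key_neg : ∀ θ ∈ Set.Icc θs (π/2), cos θ * (1 + 3*c*(sin θ)^2) - 1 ≤ 0 := by
    rintro θ ⟨hθ1, hθ2⟩
    have hθ0 : 0 ≤ θ := hθs0.trans hθ1
    have hsθ0 : 0 ≤ sin θs := by rw [hsv]; exact Real.sqrt_nonneg v
    have hsle : sin θs ≤ sin θ := by
      rcases eq_or_lt_of_le hθ1 with rfl | hlt
      · exact le_rfl
      · exact (strictMonoOn_sin ⟨by linarith, hθs2⟩ ⟨by linarith, hθ2⟩ hlt).le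
    have hw : v ≤ sin θ ^ 2 := by nlinarith
    have hw1 : sin θ ^ 2 ≤ 1 := by nlinarith [sin_le_one θ]
    have hqw : q (sin θ ^ 2) ≤ 0 := by
      have hdif : q v - q (sin θ ^ 2)
          = (sin θ ^ 2 - v) * (9*c^2*(v + sin θ ^ 2) + 6*c - 9*c^2) := by
        rw [hq_def]; ring
      have hbr : (0:ℝ) ≤ 9*c^2*(v + sin θ ^ 2) + 6*c - 9*c^2 := by nlinarith [hv.1, sq_nonneg (sin θ)]
      have hpr := mul_nonneg (by linarith : (0:ℝ) ≤ sin θ ^ 2 - v) hbr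
      linarith
    have hcos2 : cos θ ^ 2 = 1 - sin θ ^ 2 := by
      have := sin_sq_add_cos_sq θ; linarith
    have hcos0 : 0 ≤ cos θ := cos_nonneg_of_mem_Icc ⟨by linarith, hθ2⟩
    have hone : (1 - sin θ ^ 2) * (1 + 3*c*(sin θ ^ 2))^2 ≤ 1 := by
      have hexp : (1 - sin θ ^ 2) * (1 + 3*c*(sin θ ^ 2))^2 - 1
          = (sin θ ^ 2) * q (sin θ ^ 2) := by rw [hq_def]; ring
      have := mul_nonpos_of_nonneg_of_nonpos (sq_nonneg (sin θ)) hqw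
      linarith
    have hA2 : (cos θ * (1 + 3*c*(sin θ ^ 2)))^2 = (1 - sin θ ^ 2) * (1 + 3*c*(sin θ ^ 2))^2 := by
      rw [mul_pow, hcos2]
    have hA0 : 0 ≤ cos θ * (1 + 3*c*(sin θ ^ 2)) :=
      mul_nonneg hcos0 (by nlinarith [sq_nonneg (sin θ)] : (0:ℝ) ≤ 1 + 3*c*(sin θ ^ 2))
    nlinarith [hA2, hA0, hone]
  have hmono : MonotoneOn h (Set.Icc 0 θs) := by
    apply monotoneOn_of_deriv_nonneg (convex_Icc _ _) hdiff.continuous.continuousOn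
      hdiff.differentiableOn
    intro θ hθ
    rw [interior_Icc] at hθ
    rw [(hderiv θ).deriv]
    exact key_pos θ ⟨hθ.1.le, hθ.2.le⟩
  have hanti : AntitoneOn h (Set.Icc θs (π/2)) := by
    apply antitoneOn_of_deriv_nonpos (convex_Icc _ _) hdiff.continuous.continuousOn
      hdiff.differentiableOn
    intro θ hθ
    rw [interior_Icc] at hθ
    rw [(hderiv θ).deriv]
    exact key_neg θ ⟨hθ.1.le, hθ.2.le⟩
  have h0' : h 0 = 0 := by rw [hh_def]; simp
  have hpi2 : h (π/2) = 0 := by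
    rw [hh_def]; simp only [sin_pi_div_two]; rw [hc_def]; ring
  have hnonneg : ∀ θ ∈ Set.Icc 0 (π/2), 0 ≤ h θ := by
    rintro θ ⟨hθ0, hθ2⟩
    rcases le_total θ θs with hle | hge
    · have := hmono (Set.mem_Icc.2 ⟨le_refl 0, hθs0⟩) (Set.mem_Icc.2 ⟨hθ0, hle⟩) hθ0
      rwa [h0'] at this
    · have := hanti (Set.mem_Icc.2 ⟨hge, hθ2⟩) (Set.mem_Icc.2 ⟨hθs2, le_refl _⟩) hθ2
      rwa [hpi2] at this
  have hθ0 : 0 ≤ arcsin t := arcsin_nonneg.2 h0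
  have hθ2 : arcsin t ≤ π / 2 := arcsin_le_pi_div_two t
  have hst : sin (arcsin t) = t := sin_arcsin (by linarith) h1
  have hfin := hnonneg (arcsin t) (Set.mem_Icc.2 ⟨hθ0, hθ2⟩)
  rw [hh_def] at hfin
  simp only [hst] at hfin
  rw [hc_def] at hfin
  linarith

/-- |arcsin t - t| <= (pi/2-1)|t|^3 for t in [-1,1]. -/
lemma abs_arcsin_sub_le {t : ℝ} (h0 : -1 ≤ t) (h1 : t ≤ 1) :
    |arcsin t - t| ≤ (π / 2 - 1) * |t| ^ 3 := by
  have key : ∀ s : ℝ, 0 ≤ s → s ≤ 1 → 0 ≤ arcsin s - s ∧ arcsin s - s ≤ (π/2-1) * s^3 := by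
    intro s hs0 hs1
    constructor
    · have hs : sin (arcsin s) ≤ arcsin s := Real.sin_le (arcsin_nonneg.2 hs0)
      rw [sin_arcsin (by linarith) hs1] at hs
      linarith
    · have := arcsin_le_cubic hs0 hs1
      linarith
  rcases le_total 0 t with ht | ht
  · obtain ⟨hl, hr⟩ := key t ht h1
    rw [abs_of_nonneg hl, abs_of_nonneg ht]
    exact hr
  · obtain ⟨hl, hr⟩ := key (-t) (by linarith) (by linarith)
    rw [arcsin_neg] at hl hr
    rw [abs_of_nonpos (by linarith), abs_of_nonpos ht]
    nlinarith

/-- |arcsin t| <= (pi/2)|t| for t in [-1,1]. -/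
lemma abs_arcsin_le' {t : ℝ} (h0 : -1 ≤ t) (h1 : t ≤ 1) : |arcsin t| ≤ π / 2 * |t| := by
  have key : ∀ s : ℝ, 0 ≤ s → s ≤ 1 → arcsin s ≤ π/2 * s := by
    intro s hs0 hs1
    have h := arcsin_le_cubic hs0 hs1
    have hc : (0:ℝ) ≤ π/2 - 1 := by nlinarith [pi_gt_three]
    have hpow : s ^ 3 ≤ s := pow_le_of_le_one hs0 hs1 (by norm_num)
    nlinarith
  rcases le_total 0 t with ht | ht
  · rw [abs_of_nonneg (arcsin_nonneg.2 ht), abs_of_nonneg ht]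
    exact key t ht h1
  · have hk := key (-t) (by linarith) (by linarith)
    rw [arcsin_neg] at hk
    rw [abs_of_nonpos (arcsin_nonpos.2 ht), abs_of_nonpos ht]
    linarith

theorem stmt_1 (x y : ℝ) (hx : x ∈ Set.Icc (-1 : ℝ) 1) (hy : y ∈ Set.Icc (-1 : ℝ) 1) :
    (4 / π ^ 2) * (x - y) ^ 2 ≤ ((2 / π) * arcsin x - (2 / π) * arcsin y) ^ 2 ∧
    ((2 / π) * arcsin x - (2 / π) * arcsin y) ^ 2 ≤
      (4 / π ^ 2) * (x - y) ^ 2 + 2 * (1 - 4 / π ^ 2) * (x ^ 4 + y ^ 4) := by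
  obtain ⟨hx1, hx2⟩ := hx
  obtain ⟨hy1, hy2⟩ := hy
  have hπ : (0:ℝ) < π := pi_pos
  set a := arcsin x with ha_def
  set b := arcsin y with hb_def
  have hsa : sin a = x := sin_arcsin hx1 hx2
  have hsb : sin b = y := sin_arcsin hy1 hy2
  have heq : ((2/π) * a - (2/π) * b)^2 = 4/π^2 * (a - b)^2 := by
    field_simp; ring
  constructor
  · have hlip : |x - y| ≤ |a - b| := by
      rw [← hsa, ← hsb, Real.sin_sub_sin]
      calc |2 * sin ((a-b)/2) * cos ((a+b)/2)|
          = 2 * |sin ((a-b)/2)| * |cos ((a+b)/2)| := by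
            rw [abs_mul, abs_mul]; norm_num
        _ ≤ 2 * |(a-b)/2| * 1 := by
            apply mul_le_mul (by nlinarith [abs_sin_le_abs (x := (a-b)/2)])
              (abs_cos_le_one _) (abs_nonneg _) (by positivity)
        _ = |a - b| := by rw [abs_div, abs_two]; ring
    have hsq : (x - y)^2 ≤ (a - b)^2 := by
      rw [← sq_abs (x - y), ← sq_abs (a - b)]
      exact pow_le_pow_left₀ (abs_nonneg _) hlip 2
    rw [heq]
    have h4 : (0:ℝ) < 4/π^2 := by positivity
    have := mul_le_mul_of_nonneg_left hsq h4.le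
    linarith
  · rw [heq]
    have hQ : |(a - x) - (b - y)| ≤ (π/2 - 1) * (|x|^3 + |y|^3) := by
      calc |(a - x) - (b - y)| ≤ |a - x| + |b - y| := abs_sub _ _
        _ ≤ (π/2-1) * |x|^3 + (π/2-1) * |y|^3 :=
            add_le_add (abs_arcsin_sub_le hx1 hx2) (abs_arcsin_sub_le hy1 hy2)
        _ = (π/2 - 1) * (|x|^3 + |y|^3) := by ring
    have hP : |a - b + (x - y)| ≤ (π/2 + 1) * (|x| + |y|) := by
      calc |a - b + (x - y)| ≤ |a| + |b| + (|x| + |y|) := by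
            have h1 : |a - b + (x - y)| ≤ |a - b| + |x - y| := abs_add_le _ _
            have h2 : |a - b| ≤ |a| + |b| := abs_sub _ _
            have h3 : |x - y| ≤ |x| + |y| := abs_sub _ _
            linarith
        _ ≤ π/2 * |x| + π/2 * |y| + (|x| + |y|) := by
            have hax := abs_arcsin_le' hx1 hx2
            have hay := abs_arcsin_le' hy1 hy2
            linarith
        _ = (π/2 + 1) * (|x| + |y|) := by ring
    have hprod : (a - b + (x - y)) * ((a - x) - (b - y)) ≤
        (π/2 + 1) * (|x| + |y|) * ((π/2 - 1) * (|x|^3 + |y|^3)) := by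
      calc (a - b + (x - y)) * ((a - x) - (b - y))
          ≤ |a - b + (x - y)| * |(a - x) - (b - y)| := by
            rw [← abs_mul]; exact le_abs_self _
        _ ≤ (π/2 + 1) * (|x| + |y|) * ((π/2 - 1) * (|x|^3 + |y|^3)) := by
            apply mul_le_mul hP hQ (abs_nonneg _)
            positivity
    have hc : (0:ℝ) ≤ π/2 - 1 := by nlinarith [pi_gt_three]
    have hmix : (|x| + |y|) * (|x|^3 + |y|^3) ≤ 2 * (x^4 + y^4) := by
      have hd : 0 ≤ (|x| - |y|) * (|x|^3 - |y|^3) := by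
        rcases le_total (|x|) (|y|) with hxy | hxy
        · have h3 : |x|^3 ≤ |y|^3 := pow_le_pow_left₀ (abs_nonneg x) hxy 3
          have : (|x| - |y|) * (|x|^3 - |y|^3) = (|y| - |x|) * (|y|^3 - |x|^3) := by ring
          rw [this]
          exact mul_nonneg (by linarith) (by linarith)
        · have h3 : |y|^3 ≤ |x|^3 := pow_le_pow_left₀ (abs_nonneg y) hxy 3
          exact mul_nonneg (by linarith) (by linarith)
      have hx4 : |x|^4 = x^4 := by rw [← abs_pow, abs_of_nonneg (by positivity : (0:ℝ) ≤ x^4)]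
      have hy4 : |y|^4 = y^4 := by rw [← abs_pow, abs_of_nonneg (by positivity : (0:ℝ) ≤ y^4)]
      nlinarith
    have hG : (a - b)^2 ≤ (x - y)^2 + 2 * (π/2+1) * (π/2-1) * (x^4 + y^4) := by
      have hfact : (a - b)^2 - (x - y)^2 = (a - b + (x - y)) * ((a - x) - (b - y)) := by ring
      have hk : (0:ℝ) ≤ (π/2+1) * (π/2-1) := mul_nonneg (by positivity) hc
      have hmm := mul_le_mul_of_nonneg_left hmix hk
      nlinarith [hfact, hprod, hmm]
    have h4 : (0:ℝ) < 4/π^2 := by positivity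
    have hmul := mul_le_mul_of_nonneg_left hG h4.le
    have hrhs : 4/π^2 * ((x - y)^2 + 2 * (π/2+1) * (π/2-1) * (x^4 + y^4))
        = 4/π^2 * (x - y)^2 + 2 * (1 - 4/π^2) * (x^4 + y^4) := by
      field_simp; ring
    rw [hrhs] at hmul
    linarith
end

section
/- For every x ∈ [-1,1], the function h(x) = (π²/4 − 1)x⁴ + x² − arcsin²(x) is nonnegative. -/
open Real

set_option maxHeartbeats 1000000

lemma key0 (t : ℝ) (h0 : 0 ≤ t) (h1 : t ≤ 1) :
    (1:ℝ)/2 ≤ 1.46 * (1 - t/4) ^ 4 + t/16 := by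
  nlinarith [mul_nonneg (mul_nonneg h0 h0) (sub_nonneg.2 h1), sq_nonneg (1 - t),
    sub_nonneg.2 h1, sq_nonneg t, pow_nonneg h0 4, sq_nonneg (t*(1-t))]

lemma key1 (θ : ℝ) (h0 : 0 ≤ θ) (h1 : θ ≤ 1) :
    θ ^ 2 ≤ 1.46 * (θ - θ ^ 3 / 4) ^ 4 + (θ - θ ^ 3 / 4) ^ 2 := by
  have ht0 : 0 ≤ θ ^ 2 := sq_nonneg θ
  have ht1 : θ ^ 2 ≤ 1 := by nlinarith
  have hk := key0 (θ ^ 2) ht0 ht1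
  nlinarith [mul_nonneg (mul_nonneg ht0 ht0)
    (by linarith : (0:ℝ) ≤ 1.46 * (1 - θ^2/4) ^ 4 + θ^2/16 - 1/2)]

theorem aux_nonneg (x : ℝ) (h0 : 0 ≤ x) (h1 : x ≤ 1) :
    0 ≤ (π ^ 2 / 4 - 1) * x ^ 4 + x ^ 2 - (arcsin x) ^ 2 := by
  have hθ0 : 0 ≤ arcsin x := Real.arcsin_nonneg.2 h0
  have hθπ : arcsin x ≤ π / 2 := Real.arcsin_le_pi_div_two x
  have hsin : Real.sin (arcsin x) = x := Real.sin_arcsin (by linarith) h1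
  have hπ : 3.141592 < π := Real.pi_gt_d6
  have hπ' : π < 3.15 := by linarith [Real.pi_lt_d2]
  have hc46 : (1.46 : ℝ) ≤ π ^ 2 / 4 - 1 := by nlinarith
  obtain ⟨θ, hθ0, hθπ, hsin, hθeq⟩ : ∃ θ, 0 ≤ θ ∧ θ ≤ π / 2 ∧ Real.sin θ = x ∧ arcsin x = θ :=
    ⟨arcsin x, hθ0, hθπ, hsin, rfl⟩
  rw [hθeq]
  rcases le_or_gt θ 1 with hcase | hcase
  · rcases eq_or_lt_of_le hθ0 with h | h
    · have : x = 0 := by rw [← hsin, ← h, Real.sin_zero]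
      subst this; simp; nlinarith
    · have hs : θ - θ ^ 3 / 4 < Real.sin θ := by
        have := Real.sin_gt_sub_cube h; nlinarith [pow_pos h 3]
      rw [hsin] at hs
      have hθ2 : θ ^ 2 ≤ 1 := by nlinarith
      have hL : 0 ≤ θ - θ ^ 3 / 4 := by nlinarith [mul_nonneg hθ0 (by linarith : (0:ℝ) ≤ 1 - θ ^ 2)]
      have hx2 : (θ - θ ^ 3 / 4) ^ 2 ≤ x ^ 2 := by nlinarith [mul_self_le_mul_self hL hs.le]
      have hx4 : (θ - θ ^ 3 / 4) ^ 4 ≤ x ^ 4 := by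
        nlinarith [mul_self_le_mul_self (sq_nonneg (θ - θ ^ 3 / 4)) hx2]
      have hk := key1 θ hθ0 hcase
      have hxx : (1.46:ℝ) * x ^ 4 ≤ (π ^ 2 / 4 - 1) * x ^ 4 :=
        mul_le_mul_of_nonneg_right hc46 (by positivity)
      nlinarith [mul_le_mul_of_nonneg_left hx4 (by norm_num : (0:ℝ) ≤ 1.46)]
  · obtain ⟨φ, hφ0, hφ1, hφ, hθ'⟩ :
        ∃ φ, 0 ≤ φ ∧ φ ≤ π / 2 - 1 ∧ Real.cos φ = x ∧ θ = π / 2 - φ :=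
      ⟨π / 2 - θ, by linarith, by linarith, by rw [Real.cos_pi_div_two_sub, hsin], by ring⟩
    have hc : 1 - φ ^ 2 / 2 ≤ x := by rw [← hφ]; exact Real.one_sub_sq_div_two_le_cos
    have hφ58 : φ ≤ 0.58 := by linarith
    have hx1 : (0:ℝ) ≤ 1 - φ ^ 2 / 2 := by nlinarith
    have hx2 : 1 - φ ^ 2 ≤ x ^ 2 := by nlinarith [mul_self_le_mul_self hx1 hc, sq_nonneg (φ^2)]
    have hφ2 : 0 ≤ 1 - φ ^ 2 := by nlinarith
    have hx4 : 1 - 2 * φ ^ 2 ≤ x ^ 4 := by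
      nlinarith [mul_self_le_mul_self hφ2 hx2, sq_nonneg (φ^2)]
    have hππ : π ^ 2 < 2 * π + 4 := by nlinarith
    have hπφ : π * φ ≤ 2 := by nlinarith
    rw [hθ']
    nlinarith [mul_nonneg (mul_nonneg (by linarith : (0:ℝ) ≤ π) hφ0)
        (by linarith : (0:ℝ) ≤ 2 - π * φ),
      mul_le_mul_of_nonneg_left hx4 (by linarith : (0:ℝ) ≤ π ^ 2 / 4 - 1)]

theorem stmt_3 (x : ℝ) (hx : x ∈ Set.Icc (-1 : ℝ) 1) :
    0 ≤ (π ^ 2 / 4 - 1) * x ^ 4 + x ^ 2 - (arcsin x) ^ 2 := by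
  obtain ⟨hl, hr⟩ := hx
  rcases le_total 0 x with h | h
  · exact aux_nonneg x h hr
  · have := aux_nonneg (-x) (by linarith) (by linarith)
    rw [Real.arcsin_neg] at this
    nlinarith [this]
end

section
/- For all x ∈ [0,1], arcsin(x) ≤ x / sqrt(1 − (1 − 4/π²)x²). -/
set_option maxHeartbeats 1000000
open Real

private lemma polyA (θ : ℝ) (h0 : 0 ≤ θ) (h1 : θ ≤ 0.9) :
    θ^2 ≤ (θ - θ^3/6 - 5*θ^4/96)^2 * (1 + 0.594*θ^2) := by
  nlinarith [sq_nonneg θ, sq_nonneg (θ^2), mul_nonneg h0 h0, sq_nonneg (θ - 0.9),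
    mul_nonneg (mul_nonneg h0 h0) h0, sq_nonneg (θ^2 - 0.5),
    mul_nonneg (sub_nonneg.2 h1) (mul_nonneg h0 h0),
    mul_nonneg (mul_nonneg (sub_nonneg.2 h1) (sub_nonneg.2 h1)) (mul_nonneg h0 h0),
    mul_nonneg (mul_nonneg (sub_nonneg.2 h1) h0) (mul_nonneg h0 h0)]

private lemma lemB (t p : ℝ) (hp1 : 3.141592 < p) (hp2 : p < 3.141593)
    (h0 : 0 ≤ t) (h1 : t ≤ 0.671) :
    p^2*(p/2-t)^2 ≤ (1-t^2/2)^2 * (p^2 + (p^2-4)*(p/2-t)^2) := by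
  have hp0 : 0 < p := by linarith
  have hq : (5.8696:ℝ) ≤ p^2 - 4 := by nlinarith
  have hpp : p^2 < 9.8697 := by nlinarith
  have hp4 : p^4 < 97.41 := by nlinarith
  have e1 : 0 ≤ (p^2-4)*t^5/4 := by
    have : (0:ℝ) ≤ t^5 := by positivity
    nlinarith
  have e2 : 0 ≤ (p^2/4-2)^2*t^3 := mul_nonneg (sq_nonneg _) (by positivity)
  have e3 : 0.887*((p^2-4)*p)*t^2 ≤ (p^2-4)*p*t^2*(1-t^2/4) := by
    have h4 : 0 ≤ (0.113 - t^2/4) := by nlinarith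
    have h5 : 0 ≤ (p^2-4)*p*t^2 := mul_nonneg (mul_nonneg (by nlinarith) hp0.le) (sq_nonneg t)
    nlinarith [mul_nonneg h5 h4]
  have ha : (18.43:ℝ) ≤ (p^2-4)*p := by
    have h6 : (5.8696:ℝ)*3.141592 ≤ (p^2-4)*p :=
      mul_le_mul hq hp1.le (by norm_num) (by nlinarith)
    norm_num at h6
    linarith
  have e4 : 0 ≤ 4*p - (4+p^4/4)*t + 0.887*((p^2-4)*p)*t^2 := by
    nlinarith [sq_nonneg (t - 0.8668), mul_nonneg h0 (sub_nonneg.2 h1),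
      mul_nonneg (sub_nonneg.2 ha) (sq_nonneg t)]
  have hG : 0 ≤ 4*p - (4+p^4/4)*t + (p^2-4)*p*t^2*(1-t^2/4) + (p^2-4)*t^5/4 + (p^2/4-2)^2*t^3 := by
    linarith
  nlinarith [mul_nonneg h0 hG]


private lemma key2' (θ : ℝ) (hθ0 : 0 ≤ θ) (hθhi : θ ≤ π/2) :
    θ^2 ≤ (sin θ)^2 * (1 + (1 - 4/π^2)*θ^2) := by
  have hp1 : 3.141592 < π := pi_gt_d6
  have hp2 : π < 3.141593 := pi_lt_d6
  have hπ2 : (0:ℝ) < π^2 := by positivity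
  have hc4 : 4/π^2 ≤ 0.406 := by
    rw [div_le_iff₀ hπ2]; nlinarith
  have hc0 : 0 < 1 - 4/π^2 := by
    have : 4/π^2 < 1 := by rw [div_lt_iff₀ hπ2]; nlinarith
    linarith
  rcases le_or_gt θ 0.9 with hA | hB
  · -- case A
    have habs : |θ| ≤ 1 := by rw [abs_of_nonneg hθ0]; linarith
    have hb := Real.sin_bound habs
    rw [abs_of_nonneg hθ0] at hb
    have hlb : θ - θ^3/6 - 5*θ^4/96 ≤ sin θ := by
      have := (abs_le.1 hb).1
      nlinarith [mul_nonneg (pow_nonneg hθ0 4) (by linarith : (0:ℝ) ≤ 5/96 - θ/100)]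
    have hplb : 0 ≤ θ - θ^3/6 - 5*θ^4/96 := by
      nlinarith [mul_nonneg hθ0 (mul_nonneg hθ0 hθ0), sq_nonneg θ,
        mul_nonneg (sub_nonneg.2 hA) (sq_nonneg θ),
        mul_nonneg (sub_nonneg.2 hA) (mul_nonneg hθ0 hθ0)]
    have hxsq : (θ - θ^3/6 - 5*θ^4/96)^2 ≤ (sin θ)^2 := by nlinarith
    have hmain := polyA θ hθ0 hA
    calc θ^2 ≤ (θ - θ^3/6 - 5*θ^4/96)^2 * (1 + 0.594*θ^2) := hmain
      _ ≤ (sin θ)^2 * (1 + 0.594*θ^2) := by nlinarith [sq_nonneg θ]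
      _ ≤ (sin θ)^2 * (1 + (1 - 4/π^2)*θ^2) := by
          nlinarith [sq_nonneg (sin θ), sq_nonneg θ,
            mul_nonneg (mul_nonneg (sq_nonneg (sin θ)) (sq_nonneg θ)) (by linarith : (0:ℝ) ≤ 1 - 4/π^2 - 0.594)]
  · -- case B
    obtain ⟨t, hθt⟩ : ∃ t, θ = π/2 - t := ⟨π/2 - θ, by ring⟩
    have ht0 : 0 ≤ t := by nlinarith
    have ht1 : t ≤ 0.671 := by nlinarith
    have hcos : sin θ = cos t := by rw [hθt, sin_pi_div_two_sub]
    have hclb : 1 - t^2/2 ≤ cos t := one_sub_sq_div_two_le_cos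
    have hcpos : 0 ≤ 1 - t^2/2 := by nlinarith
    have hxsq : (1 - t^2/2)^2 ≤ (sin θ)^2 := by rw [hcos]; nlinarith
    have hBmul := lemB t π hp1 hp2 ht0 ht1
    have hBdiv : (π/2-t)^2 ≤ (1-t^2/2)^2 * (1 + (1 - 4/π^2)*(π/2-t)^2) := by
      have h10 : 1 + (1 - 4/π^2)*(π/2-t)^2 = (π^2+(π^2-4)*(π/2-t)^2)/π^2 := by
        field_simp
      rw [h10, mul_div_assoc', le_div_iff₀ hπ2]
      nlinarith [hBmul]
    rw [← hθt] at hBdiv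
    have h1c : 0 ≤ 1 + (1 - 4/π^2)*θ^2 := by nlinarith [sq_nonneg θ]
    nlinarith [mul_le_mul_of_nonneg_right hxsq h1c]

theorem stmt_4 (x : ℝ) (hx : x ∈ Set.Icc (0 : ℝ) 1) :
    arcsin x ≤ x / Real.sqrt (1 - (1 - 4 / π ^ 2) * x ^ 2) := by
  obtain ⟨hx0, hx1⟩ := hx
  have hp1 : 3.141592 < π := pi_gt_d6
  have hp2 : π < 3.141593 := pi_lt_d6
  have hπ2 : (0:ℝ) < π^2 := by positivity
  have hc4 : 4/π^2 ≤ 0.406 := by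
    rw [div_le_iff₀ hπ2]; nlinarith
  have hc0 : 0 < 1 - 4/π^2 := by
    have : 4/π^2 < 1 := by rw [div_lt_iff₀ hπ2]; nlinarith
    linarith
  have hθ0 : 0 ≤ arcsin x := arcsin_nonneg.2 hx0
  have hθhi : arcsin x ≤ π/2 := arcsin_le_pi_div_two x
  have hs : sin (arcsin x) = x := sin_arcsin (by linarith) hx1
  have key2 : (arcsin x)^2 ≤ x^2 * (1 + (1 - 4/π^2)*(arcsin x)^2) := by
    have := key2' (arcsin x) hθ0 hθhi
    rwa [hs] at this
  have hx2 : x^2 ≤ 1 := by nlinarith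
  have hD : 0 < 1 - (1 - 4/π^2)*x^2 := by
    have h11 := mul_le_mul_of_nonneg_left hx2 hc0.le
    have h12 : 0 < 4/π^2 := by positivity
    nlinarith
  have key : (arcsin x)^2 * (1 - (1 - 4/π^2)*x^2) ≤ x^2 := by nlinarith
  have hsD : 0 < Real.sqrt (1 - (1 - 4/π^2)*x^2) := Real.sqrt_pos.2 hD
  have hgoal : arcsin x * Real.sqrt (1 - (1 - 4/π^2)*x^2) ≤ x := by
    have h8 : arcsin x * Real.sqrt (1 - (1 - 4/π^2)*x^2)
        = Real.sqrt ((arcsin x)^2 * (1 - (1 - 4/π^2)*x^2)) := by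
      rw [Real.sqrt_mul (sq_nonneg _), Real.sqrt_sq hθ0]
    rw [h8]
    calc Real.sqrt ((arcsin x)^2 * (1 - (1 - 4/π^2)*x^2)) ≤ Real.sqrt (x^2) :=
        Real.sqrt_le_sqrt key
      _ = x := Real.sqrt_sq hx0
  have hrw : (1:ℝ) - (1 - 4/π^2) * x^2 = 1 - (1 - 4/π^2)*x^2 := by ring
  rw [hrw]
  exact (le_div_iff₀ hsD).2 hgoal
end

section
/- Let W ∈ R^{n×p} satisfy, for all unit vectors x, y ∈ S^{p-1}: ‖x−y‖² − ε ≤ β^{-1}‖ASU(Wx) − ASU(Wy)‖² ≤ ‖x−y‖² + ε, with β > 0 and ε ∈ [0,1). Then for all x, y ∈ S^{p-1} (with ASU(Wx), ASU(Wy) nonzero), ‖ASU(Wx)/‖ASU(Wx)‖ − ASU(Wy)/‖ASU(Wy)‖‖² ≤ ‖x−y‖² + 5ε/(1+ε). -/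
open Real
open RealInnerProductSpace

/-- The entrywise `ASU` map `x ↦ (2/π) arcsin (Wx)`. -/
noncomputable def ASUvec {n p : ℕ} (W : Matrix (Fin n) (Fin p) ℝ)
    (x : EuclideanSpace ℝ (Fin p)) : EuclideanSpace ℝ (Fin n) :=
  WithLp.toLp 2 (fun i => (2 / π) * arcsin (∑ j, W i j * x j))

lemma ASUvec_neg {n p : ℕ} (W : Matrix (Fin n) (Fin p) ℝ)
    (x : EuclideanSpace ℝ (Fin p)) : ASUvec W (-x) = -ASUvec W x := by
  ext i
  simp [ASUvec, mul_neg, Finset.sum_neg_distrib, Real.arcsin_neg]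

lemma key_ineq (β ε d S m : ℝ) (hβ : 0 < β) (hε0 : 0 ≤ ε) (hε1 : ε < 1)
    (hd0 : 0 ≤ d) (hd4 : d * (1 + ε) ≤ 4 - ε)
    (hm0 : 0 < m) (hm1 : β * (4 - ε) ≤ 4 * m) (hm2 : 4 * m ≤ β * (4 + ε))
    (hS : β * (2 - d - 3 * ε / 2) ≤ S) :
    2 - S / m ≤ d + 5 * ε / (1 + ε) := by
  have h1ε : (0:ℝ) < 1 + ε := by linarith
  have key' : (2 - d) * (1 + ε) * m - 5 * ε * m ≤ S * (1 + ε) := by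
    have hS' : β * (2 - d - 3 * ε / 2) * (1 + ε) ≤ S * (1 + ε) :=
      mul_le_mul_of_nonneg_right hS h1ε.le
    rcases le_or_gt 0 ((2 - d) * (1 + ε) - 5 * ε) with h | h
    · nlinarith [mul_le_mul_of_nonneg_left hm2 h,
        mul_nonneg (mul_nonneg hβ.le hε0) hd0, mul_nonneg hβ.le hε0,
        mul_nonneg (mul_nonneg hβ.le hε0) hε0,
        mul_nonneg (mul_nonneg (mul_nonneg hβ.le hε0) hε0) hd0]
    · nlinarith [mul_le_mul_of_nonneg_left hm1 (le_of_lt (neg_pos.mpr h)),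
        mul_nonneg (mul_nonneg hβ.le hε0) hd0, mul_nonneg hβ.le hε0,
        mul_nonneg (mul_nonneg hβ.le hε0) hε0,
        mul_nonneg (mul_nonneg (mul_nonneg hβ.le hε0) hε0) hd0]
  have e1 : 2 - S / m = (2 * m - S) / m := by field_simp
  have e2 : d + 5 * ε / (1 + ε) = (d * (1 + ε) + 5 * ε) / (1 + ε) := by
    field_simp
  rw [e1, e2, div_le_div_iff₀ hm0 h1ε]
  nlinarith [key']

set_option maxHeartbeats 1000000 in
theorem stmt_8 {n p : ℕ} (W : Matrix (Fin n) (Fin p) ℝ)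
    (hW : ∀ i, ∑ j, W i j ^ 2 = 1)
    (β ε : ℝ) (hβ : 0 < β) (hε : ε ∈ Set.Ico (0 : ℝ) 1)
    (hiso : ∀ x y : EuclideanSpace ℝ (Fin p), ‖x‖ = 1 → ‖y‖ = 1 →
      ‖x - y‖ ^ 2 - ε ≤ β⁻¹ * ‖ASUvec W x - ASUvec W y‖ ^ 2 ∧
      β⁻¹ * ‖ASUvec W x - ASUvec W y‖ ^ 2 ≤ ‖x - y‖ ^ 2 + ε) :
    ∀ x y : EuclideanSpace ℝ (Fin p), ‖x‖ = 1 → ‖y‖ = 1 →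
      ASUvec W x ≠ 0 → ASUvec W y ≠ 0 →
      ‖(‖ASUvec W x‖⁻¹ • ASUvec W x) - (‖ASUvec W y‖⁻¹ • ASUvec W y)‖ ^ 2 ≤
        ‖x - y‖ ^ 2 + 5 * ε / (1 + ε) := by
  intro x y hx hy ha0 hb0
  obtain ⟨hε0, hε1⟩ := hε
  have h1ε : (0:ℝ) < 1 + ε := by linarith
  -- norm bounds on images
  have normsq : ∀ z : EuclideanSpace ℝ (Fin p), ‖z‖ = 1 →
      β * (4 - ε) ≤ 4 * ‖ASUvec W z‖ ^ 2 ∧ 4 * ‖ASUvec W z‖ ^ 2 ≤ β * (4 + ε) := by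
    intro z hz
    have hnz : ‖(-z : EuclideanSpace ℝ (Fin p))‖ = 1 := by rw [norm_neg]; exact hz
    have hzz : ‖z - (-z)‖ ^ 2 = 4 := by
      rw [sub_neg_eq_add, ← two_smul ℝ, norm_smul]
      simp [hz]
      norm_num
    have hAA : ‖ASUvec W z - ASUvec W (-z)‖ ^ 2 = 4 * ‖ASUvec W z‖ ^ 2 := by
      rw [ASUvec_neg, sub_neg_eq_add, ← two_smul ℝ, norm_smul]
      simp
      ring
    obtain ⟨h1, h2⟩ := hiso z (-z) hz hnz
    rw [hzz, hAA, inv_mul_eq_div, le_div_iff₀ hβ] at h1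
    rw [hAA, inv_mul_eq_div, div_le_iff₀ hβ] at h2
    constructor <;> nlinarith [h1, h2]
  obtain ⟨hA1, hA2⟩ := normsq x hx
  obtain ⟨hB1, hB2⟩ := normsq y hy
  obtain ⟨hD1, hD2⟩ := hiso x y hx hy
  set a := ASUvec W x with ha
  set b := ASUvec W y with hb
  clear_value a b
  clear hiso normsq hD1
  rw [inv_mul_eq_div, div_le_iff₀ hβ] at hD2
  have hna : 0 < ‖a‖ := norm_pos_iff.mpr ha0
  have hnb : 0 < ‖b‖ := norm_pos_iff.mpr hb0
  set d := ‖x - y‖ ^ 2 with hdd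
  have hd0 : 0 ≤ d := sq_nonneg _
  -- unit vector difference squared norm
  have hu : ‖(‖a‖⁻¹ • a) - (‖b‖⁻¹ • b)‖ ^ 2
      = 2 - 2 * (‖a‖⁻¹ * (‖b‖⁻¹ * ⟪a, b⟫)) := by
    rw [@norm_sub_sq_real, real_inner_smul_left, real_inner_smul_right,
      norm_smul, norm_smul]
    simp [Real.norm_eq_abs, abs_of_nonneg (inv_nonneg.mpr (norm_nonneg _))]
    field_simp
    ring
  have hI : 2 * ⟪a, b⟫ = ‖a‖ ^ 2 + ‖b‖ ^ 2 - ‖a - b‖ ^ 2 := by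
    rw [@norm_sub_sq_real]; ring
  rcases le_or_gt (d * (1 + ε)) (4 - ε) with hcase | hcase
  · -- main case
    set m := ‖a‖ * ‖b‖ with hm
    have hm0 : 0 < m := mul_pos hna hnb
    have hm1 : β * (4 - ε) ≤ 4 * m := by
      have hb40 : (0:ℝ) ≤ β * (4 - ε) := by nlinarith
      have hsq : (β * (4 - ε)) ^ 2 ≤ (4 * m) ^ 2 := by
        have := mul_le_mul hA1 hB1 hb40 (by positivity)
        nlinarith [this]
      exact (pow_le_pow_iff_left₀ hb40 (by positivity) two_ne_zero).mp hsq
    have hm2 : 4 * m ≤ β * (4 + ε) := by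
      have hsq : (4 * m) ^ 2 ≤ (β * (4 + ε)) ^ 2 := by
        have := mul_le_mul hA2 hB2 (by positivity) (by nlinarith)
        nlinarith [this]
      exact (pow_le_pow_iff_left₀ (by positivity) (by nlinarith) two_ne_zero).mp hsq
    have hS : β * (2 - d - 3 * ε / 2) ≤ 2 * ⟪a, b⟫ := by
      rw [hI]; nlinarith [hA1, hB1, hD2]
    have hkey := key_ineq β ε d (2 * ⟪a, b⟫) m hβ hε0 hε1 hd0 hcase hm0 hm1 hm2 hS
    rw [hu]
    have heq : 2 - 2 * (‖a‖⁻¹ * (‖b‖⁻¹ * ⟪a, b⟫)) = 2 - 2 * ⟪a, b⟫ / m := by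
      rw [hm]; field_simp
    rw [heq]
    exact hkey
  · -- trivial case: LHS ≤ 4 ≤ RHS
    have hlhs : ‖(‖a‖⁻¹ • a) - (‖b‖⁻¹ • b)‖ ≤ 2 := by
      calc ‖(‖a‖⁻¹ • a) - (‖b‖⁻¹ • b)‖ ≤ ‖‖a‖⁻¹ • a‖ + ‖‖b‖⁻¹ • b‖ := norm_sub_le _ _
        _ = 2 := by
          rw [norm_smul, norm_smul]
          simp [Real.norm_eq_abs, abs_of_nonneg (inv_nonneg.mpr (norm_nonneg _))]
          rw [inv_mul_cancel₀ (ne_of_gt hna), inv_mul_cancel₀ (ne_of_gt hnb)]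
          norm_num
    have h4 : (4:ℝ) ≤ d + 5 * ε / (1 + ε) := by
      have : 4 - d ≤ 5 * ε / (1 + ε) := by
        rw [le_div_iff₀ h1ε]; nlinarith
      linarith
    nlinarith [norm_nonneg ((‖a‖⁻¹ • a) - (‖b‖⁻¹ • b))]
end

section
/- For every integer p ≥ 27, ∫₀¹ (1 + x²)^{-(p/6 − 1)} dx ≤ sqrt(6/(p−6)). -/
open Real

private lemma deriv_aux (c : ℝ) (hc : 0 < c) (x : ℝ) :
    HasDerivAt (fun x : ℝ => x*(8*c^2*x^4+20*c*x^2+15) / (15*(1+c*x^2)^2*Real.sqrt (1+c*x^2)))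
      ((1+c*x^2) ^ (-(7/2 : ℝ))) x := by
  have hu : (0:ℝ) < 1 + c*x^2 := by positivity
  have hs : (0:ℝ) < Real.sqrt (1+c*x^2) := Real.sqrt_pos.mpr hu
  have hU : HasDerivAt (fun x : ℝ => 1 + c*x^2) (c*(2*x)) x := by
    have : HasDerivAt (fun x : ℝ => 1 + c*x^2) (0 + c*(2*x^1)) x :=
      (hasDerivAt_const x 1).add ((hasDerivAt_pow 2 x).const_mul c)
    simpa using this
  have hS : HasDerivAt (fun x : ℝ => Real.sqrt (1+c*x^2)) (1/(2*Real.sqrt (1+c*x^2)) * (c*(2*x))) x :=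
    (Real.hasDerivAt_sqrt hu.ne').comp x hU
  have hN : HasDerivAt (fun x : ℝ => x*(8*c^2*x^4+20*c*x^2+15))
      (1*(8*c^2*x^4+20*c*x^2+15) + x*(8*c^2*(4*x^3)+20*c*(2*x))) x := by
    have h1 : HasDerivAt (fun x : ℝ => 8*c^2*x^4+20*c*x^2+15)
        (8*c^2*(4*x^3)+20*c*(2*x)) x := by
      have := (((hasDerivAt_pow 4 x).const_mul (8*c^2)).add ((hasDerivAt_pow 2 x).const_mul (20*c))).add_const 15
      exact this.congr_deriv (by ring)
    exact (hasDerivAt_id x).mul h1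
  have hD : HasDerivAt (fun x : ℝ => 15*(1+c*x^2)^2*Real.sqrt (1+c*x^2))
      ((15*(2*(1+c*x^2)^1*(c*(2*x))))*Real.sqrt (1+c*x^2)
        + 15*(1+c*x^2)^2*(1/(2*Real.sqrt (1+c*x^2)) * (c*(2*x)))) x :=
    (((hU.pow 2).const_mul 15).mul hS)
  have hD0 : 15*(1+c*x^2)^2*Real.sqrt (1+c*x^2) ≠ 0 := by positivity
  have key := hN.div hD hD0
  refine key.congr_deriv (Eq.symm ?_)
  have hrw : (1+c*x^2) ^ (-(7/2 : ℝ)) = 1 / ((1+c*x^2)^3 * Real.sqrt (1+c*x^2)) := by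
    have h1 : (1+c*x^2) ^ ((7:ℝ)/2) = (1+c*x^2)^3 * Real.sqrt (1+c*x^2) := by
      rw [Real.sqrt_eq_rpow, ← Real.rpow_natCast (1+c*x^2) 3, ← Real.rpow_add hu]
      norm_num
    rw [Real.rpow_neg hu.le, h1, one_div]
  rw [hrw]
  set s := Real.sqrt (1+c*x^2) with hsdef
  have hs2 : 1 + c*x^2 = s^2 := (Real.sq_sqrt hu.le).symm
  rw [hs2]
  have hs0 : s ≠ 0 := ne_of_gt hs
  field_simp
  linear_combination (15+60*c*x^2+40*c^2*x^4) * hs2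

private lemma integral_aux (c : ℝ) (hc : 0 < c) :
    (∫ x in (0:ℝ)..1, (1+c*x^2) ^ (-(7/2 : ℝ)))
      = (8*c^2+20*c+15) / (15*(1+c)^2*Real.sqrt (1+c)) := by
  have hcont : Continuous fun x : ℝ => (1+c*x^2) ^ (-(7/2 : ℝ)) := by
    apply Continuous.rpow_const
    · exact continuous_const.add (continuous_const.mul (continuous_pow 2))
    · intro x; left; positivity
  have := intervalIntegral.integral_eq_sub_of_hasDerivAt
    (f := fun x : ℝ => x*(8*c^2*x^4+20*c*x^2+15) / (15*(1+c*x^2)^2*Real.sqrt (1+c*x^2)))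
    (fun x _ => deriv_aux c hc x) (hcont.intervalIntegrable 0 1)
  rw [this]
  norm_num

theorem stmt_12 (p : ℕ) (hp : 27 ≤ p) :
    (∫ x in (0 : ℝ)..1, (1 + x ^ 2) ^ (-((p : ℝ) / 6 - 1))) ≤
      Real.sqrt (6 / ((p : ℝ) - 6)) := by
  have hp' : (27:ℝ) ≤ (p:ℝ) := by exact_mod_cast hp
  set a : ℝ := ((p:ℝ) - 6)/6 with ha_def
  have ha : (7:ℝ)/2 ≤ a := by rw [ha_def]; linarith
  have ha0 : (0:ℝ) < a := by linarith
  set c : ℝ := 2*a/7 with hc_def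
  have hc1 : (1:ℝ) ≤ c := by rw [hc_def]; linarith
  have hc0 : (0:ℝ) < c := lt_of_lt_of_le one_pos hc1
  have hexp : -((p : ℝ)/6 - 1) = -a := by rw [ha_def]; ring
  -- pointwise bound
  have hpt : ∀ x : ℝ, (1 + x^2) ^ (-((p : ℝ)/6 - 1)) ≤ (1 + c*x^2) ^ (-(7/2 : ℝ)) := by
    intro x
    have hx0 : (0:ℝ) < 1 + x^2 := by positivity
    have hv0 : (0:ℝ) < 1 + c*x^2 := by positivity
    have hbern : 1 + c*x^2 ≤ (1 + x^2) ^ c :=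
      one_add_mul_self_le_rpow_one_add (by nlinarith [sq_nonneg x]) hc1
    have h2 : (1 + c*x^2) ^ ((7:ℝ)/2) ≤ ((1 + x^2) ^ c) ^ ((7:ℝ)/2) :=
      Real.rpow_le_rpow hv0.le hbern (by norm_num)
    have h3 : ((1 + x^2) ^ c) ^ ((7:ℝ)/2) = (1 + x^2) ^ a := by
      rw [← Real.rpow_mul hx0.le]
      congr 1
      rw [hc_def]; ring
    rw [hexp, Real.rpow_neg hx0.le, Real.rpow_neg hv0.le]
    apply inv_anti₀ (by positivity)
    rw [← h3]; exact h2
  -- integrability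
  have hint1 : IntervalIntegrable (fun x : ℝ => (1 + x^2) ^ (-((p : ℝ)/6 - 1))) MeasureTheory.volume 0 1 := by
    apply Continuous.intervalIntegrable
    apply Continuous.rpow_const (continuous_const.add (continuous_pow 2))
    intro x; left; dsimp only [Pi.add_apply]; positivity
  have hint2 : IntervalIntegrable (fun x : ℝ => (1 + c*x^2) ^ (-(7/2 : ℝ))) MeasureTheory.volume 0 1 := by
    apply Continuous.intervalIntegrable
    apply Continuous.rpow_const (continuous_const.add (continuous_const.mul (continuous_pow 2)))
    intro x; left; dsimp only [Pi.add_apply, Pi.mul_apply]; positivity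
  have hmono : (∫ x in (0 : ℝ)..1, (1 + x ^ 2) ^ (-((p : ℝ) / 6 - 1)))
      ≤ ∫ x in (0:ℝ)..1, (1 + c*x^2) ^ (-(7/2 : ℝ)) :=
    intervalIntegral.integral_mono_on (by norm_num) hint1 hint2 (fun x _ => hpt x)
  refine hmono.trans ?_
  rw [integral_aux c hc0]
  -- final algebraic inequality
  have h6 : 6 / ((p : ℝ) - 6) = 1/a := by rw [ha_def]; field_simp
  rw [h6]
  set s : ℝ := Real.sqrt (1+c) with hs_def
  set t : ℝ := Real.sqrt a with ht_def
  have hs0 : (0:ℝ) < s := Real.sqrt_pos.mpr (by linarith)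
  have ht0 : (0:ℝ) < t := Real.sqrt_pos.mpr ha0
  have hs2 : s^2 = 1 + c := Real.sq_sqrt (by linarith)
  have ht2 : t^2 = a := Real.sq_sqrt ha0.le
  have hrhs : Real.sqrt (1/a) = 1/t := by
    rw [one_div, one_div, ht_def, Real.sqrt_inv]
  rw [hrhs]
  rw [div_le_div_iff₀ (by positivity) ht0]
  -- goal : (8c²+20c+15) * t ≤ 1 * (15*(1+c)^2*s)
  have hsq : ((8*c^2+20*c+15) * t)^2 ≤ (15*(1+c)^2*s)^2 := by
    have e1 : ((8*c^2+20*c+15) * t)^2 = (8*c^2+20*c+15)^2 * a := by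
      rw [mul_pow, ht2]
    have e2 : (15*(1+c)^2*s)^2 = 225*(1+c)^5 := by
      rw [mul_pow, mul_pow, hs2]; ring
    rw [e1, e2]
    have hac : a = 7*c/2 := by rw [hc_def]; ring
    rw [hac]
    nlinarith [hc0.le, sq_nonneg c, pow_pos hc0 3, pow_pos hc0 4, pow_pos hc0 5]
  have hXnn : 0 ≤ (8*c^2+20*c+15) * t := by positivity
  have hBpos : (0:ℝ) < 15*(1+c)^2*s := by positivity
  nlinarith [hsq, hXnn, hBpos]
end

section
/- For every integer p ≥ 27, ∫₀¹ x² (1 + x²)^{-(p/3 − 1)} dx ≤ 3^{3/2} / (2 (p−6)^{3/2}). -/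
open Real


lemma gamma_mid {x : ℝ} (hx : 0 < x) :
    Real.Gamma (x + 1/2) ≤ Real.Gamma x * Real.sqrt x := by
  have h1 : 0 < Real.Gamma x := Real.Gamma_pos_of_pos hx
  have h2 : 0 < Real.Gamma (x + 1) := Real.Gamma_pos_of_pos (by linarith)
  have h3 : 0 < Real.Gamma (x + 1/2) := Real.Gamma_pos_of_pos (by linarith)
  have hc := Real.convexOn_log_Gamma.2 (Set.mem_Ioi.mpr hx)
    (Set.mem_Ioi.mpr (by linarith : (0:ℝ) < x + 1)) (by norm_num : (0:ℝ) ≤ (1:ℝ)/2)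
    (by norm_num : (0:ℝ) ≤ (1:ℝ)/2) (by norm_num)
  simp only [Function.comp_apply, smul_eq_mul] at hc
  have heq : (1:ℝ)/2 * x + 1/2 * (x + 1) = x + 1/2 := by ring
  rw [heq] at hc
  rw [Real.Gamma_add_one hx.ne'] at hc
  have hlog : Real.log (Real.Gamma (x + 1/2)) ≤ Real.log (Real.Gamma x * Real.sqrt x) := by
    rw [Real.log_mul h1.ne' (Real.sqrt_pos.mpr hx).ne', Real.log_sqrt hx.le]
    rw [Real.log_mul hx.ne' h1.ne'] at hc
    linarith
  have := Real.exp_le_exp.mpr hlog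
  rwa [Real.exp_log h3, Real.exp_log (by positivity)] at this


lemma beta_eval {a : ℝ} (ha : 8 ≤ a) :
    ∫ t in (0:ℝ)..1, t ^ ((1:ℝ)/2) * (1-t) ^ (a - 5/2)
      = Real.Gamma (3/2) * Real.Gamma (a - 3/2) / Real.Gamma a := by
  set B : ℝ := ∫ t in (0:ℝ)..1, t ^ ((1:ℝ)/2) * (1-t) ^ (a - 5/2) with hB
  have hbc : Complex.betaIntegral ((3/2 : ℝ) : ℂ) ((a - 3/2 : ℝ) : ℂ) = (B : ℂ) := by
    rw [Complex.betaIntegral, hB, ← intervalIntegral.integral_ofReal]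
    refine intervalIntegral.integral_congr fun x hx => ?_
    rw [Set.uIcc_of_le (by norm_num : (0:ℝ) ≤ 1)] at hx
    obtain ⟨hx0, hx1⟩ := hx
    have e1 : (((x : ℝ) ^ ((1:ℝ)/2) * (1-x) ^ (a - 5/2) : ℝ) : ℂ)
        = ((x:ℝ) ^ ((1:ℝ)/2) : ℝ) * (((1-x:ℝ) ^ (a - 5/2) : ℝ) : ℂ) := by push_cast; ring
    rw [e1, Complex.ofReal_cpow hx0, Complex.ofReal_cpow (by linarith : (0:ℝ) ≤ 1 - x)]
    have e2 : (((1:ℝ)/2 : ℝ) : ℂ) = ((3/2:ℝ):ℂ) - 1 := by push_cast; ring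
    have e3 : ((a - 5/2 : ℝ) : ℂ) = ((a - 3/2:ℝ):ℂ) - 1 := by push_cast; ring
    have e4 : ((1 - x : ℝ) : ℂ) = 1 - (x:ℂ) := by push_cast; ring
    rw [e2, e3, e4]
  have hg := Complex.Gamma_mul_Gamma_eq_betaIntegral
    (show 0 < Complex.re ((3/2:ℝ):ℂ) by rw [Complex.ofReal_re]; norm_num)
    (show 0 < Complex.re ((a - 3/2 : ℝ):ℂ) by rw [Complex.ofReal_re]; linarith)
  rw [hbc] at hg
  have hsum : ((3/2:ℝ):ℂ) + ((a - 3/2:ℝ):ℂ) = ((a:ℝ):ℂ) := by push_cast; ring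
  rw [hsum, Complex.Gamma_ofReal, Complex.Gamma_ofReal, Complex.Gamma_ofReal] at hg
  have hre : Real.Gamma (3/2) * Real.Gamma (a - 3/2) = Real.Gamma a * B := by
    exact_mod_cast hg
  have hΓa : 0 < Real.Gamma a := Real.Gamma_pos_of_pos (by linarith)
  rw [eq_div_iff hΓa.ne']
  linarith


theorem stmt_13 (p : ℕ) (hp : 27 ≤ p) :
    (∫ x in (0 : ℝ)..1, x ^ 2 * (1 + x ^ 2) ^ (-((p : ℝ) / 3 - 1))) ≤
      (3 : ℝ) ^ ((3 : ℝ) / 2) / (2 * ((p : ℝ) - 6) ^ ((3 : ℝ) / 2)) := by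
  have hp' : (27:ℝ) ≤ (p:ℝ) := by exact_mod_cast hp
  set a : ℝ := (p:ℝ)/3 - 1 with ha
  have ha8 : 8 ≤ a := by rw [ha]; linarith
  set g : ℝ → ℝ := fun t => 2⁻¹ * (t ^ ((1:ℝ)/2) * (1-t) ^ (a - 5/2)) with hg
  set f : ℝ → ℝ := fun x => x^2/(1+x^2) with hf
  set f' : ℝ → ℝ := fun x => 2*x/(1+x^2)^2 with hf'
  -- continuity of g
  have hc1 : Continuous fun t:ℝ => t ^ ((1:ℝ)/2) :=
    continuous_iff_continuousAt.2 fun x => Real.continuousAt_rpow_const x _ (Or.inr (by norm_num))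
  have hc2 : Continuous fun t:ℝ => (1-t) ^ (a - 5/2) := by
    have houter : Continuous fun y:ℝ => y ^ (a - 5/2) :=
      continuous_iff_continuousAt.2 fun x =>
        Real.continuousAt_rpow_const x _ (Or.inr (by linarith))
    exact houter.comp (continuous_const.sub continuous_id)
  have hgc : Continuous g := continuous_const.mul (hc1.mul hc2)
  -- derivative of f
  have hder : ∀ x ∈ Set.uIcc (0:ℝ) 1, HasDerivAt f (f' x) x := by
    intro x _
    have hP : (0:ℝ) < 1 + x^2 := by positivity
    have h1 : HasDerivAt (fun y:ℝ => y^2) (2*x) x := by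
      simpa using hasDerivAt_pow 2 x
    have h2 : HasDerivAt (fun y:ℝ => 1 + y^2) (2*x) x := by
      simpa using h1.const_add 1
    have := h1.div h2 hP.ne'
    refine this.congr_deriv ?_
    rw [hf']
    field_simp
    ring
  have hf'c : ContinuousOn f' (Set.uIcc (0:ℝ) 1) := by
    apply Continuous.continuousOn
    apply (continuous_const.mul continuous_id).div (by continuity)
    intro x; positivity
  -- step 1 : rewrite integrand
  have step1 : (∫ x in (0:ℝ)..1, x ^ 2 * (1 + x ^ 2) ^ (-a))
      = ∫ x in (0:ℝ)..1, f' x • (g ∘ f) x := by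
    refine intervalIntegral.integral_congr fun x hx => ?_
    rw [Set.uIcc_of_le (by norm_num : (0:ℝ) ≤ 1)] at hx
    obtain ⟨hx0, hx1⟩ := hx
    have hP : (0:ℝ) < 1 + x^2 := by positivity
    have e1 : 1 - x^2/(1+x^2) = (1+x^2)⁻¹ := by field_simp; ring
    have e2 : (x^2/(1+x^2)) ^ ((1:ℝ)/2) = x / (1+x^2) ^ ((1:ℝ)/2) := by
      rw [Real.div_rpow (by positivity) hP.le]
      congr 1
      rw [← Real.rpow_natCast x 2, ← Real.rpow_mul hx0]
      norm_num
    have e3 : ((1+x^2)⁻¹) ^ (a - 5/2) = ((1+x^2) ^ (a - 5/2))⁻¹ := Real.inv_rpow hP.le _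
    simp only [hf, hf', hg, Function.comp_apply, smul_eq_mul]
    rw [e1, e2, e3]
    have key : (1+x^2) ^ a = (1+x^2)^2 * ((1+x^2) ^ ((1:ℝ)/2) * (1+x^2) ^ (a - 5/2)) := by
      rw [← Real.rpow_natCast (1+x^2) 2, ← Real.rpow_add hP, ← Real.rpow_add hP]
      congr 1
      ring
    have hA : (0:ℝ) < (1+x^2) ^ ((1:ℝ)/2) := Real.rpow_pos_of_pos hP _
    have hC : (0:ℝ) < (1+x^2) ^ (a - 5/2) := Real.rpow_pos_of_pos hP _
    rw [Real.rpow_neg hP.le, key]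
    field_simp
  -- step 2 : substitution
  have step2 : (∫ x in (0:ℝ)..1, f' x • (g ∘ f) x) = ∫ t in (0:ℝ)..(1/2:ℝ), g t := by
    have := intervalIntegral.integral_comp_smul_deriv hder hf'c hgc
    rw [this]
    norm_num [hf]
  -- step 3 : extend interval
  have step3 : (∫ t in (0:ℝ)..(1/2:ℝ), g t) ≤ ∫ t in (0:ℝ)..1, g t := by
    have hsplit : (∫ t in (0:ℝ)..(1/2:ℝ), g t) + ∫ t in (1/2:ℝ)..1, g t
        = ∫ t in (0:ℝ)..1, g t :=
      intervalIntegral.integral_add_adjacent_intervals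
        (hgc.intervalIntegrable _ _) (hgc.intervalIntegrable _ _)
    have hnn : 0 ≤ ∫ t in (1/2:ℝ)..1, g t := by
      refine intervalIntegral.integral_nonneg (by norm_num) fun u hu => ?_
      obtain ⟨hu0, hu1⟩ := hu
      have h1 : (0:ℝ) ≤ u := by linarith
      have h2 : (0:ℝ) ≤ 1 - u := by linarith
      rw [hg]
      exact mul_nonneg (by norm_num)
        (mul_nonneg (Real.rpow_nonneg h1 _) (Real.rpow_nonneg h2 _))
    linarith
  -- step 4 : evaluate beta integral
  have step4 : (∫ t in (0:ℝ)..1, g t)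
      = 2⁻¹ * (Real.Gamma (3/2) * Real.Gamma (a - 3/2) / Real.Gamma a) := by
    rw [hg, intervalIntegral.integral_const_mul, beta_eval ha8]
  -- step 5 : Gamma bounds
  have hΓ2 : 0 < Real.Gamma (a - 2) := Real.Gamma_pos_of_pos (by linarith)
  have hG32 : Real.Gamma (3/2) = Real.sqrt π / 2 := by
    have h : (3/2 : ℝ) = 1/2 + 1 := by norm_num
    rw [h, Real.Gamma_add_one (by norm_num), Real.Gamma_one_half_eq]
    ring
  have hmid : Real.Gamma (a - 3/2) ≤ Real.Gamma (a - 2) * Real.sqrt (a - 2) := by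
    have := gamma_mid (show (0:ℝ) < a - 2 by linarith)
    have h : a - 2 + 1/2 = a - 3/2 := by ring
    rwa [h] at this
  have hGa : Real.Gamma a = (a-1) * (a-2) * Real.Gamma (a - 2) := by
    have h1 : a = (a - 1) + 1 := by ring
    have h2 : a - 1 = (a - 2) + 1 := by ring
    rw [h1, Real.Gamma_add_one (by linarith), h2, Real.Gamma_add_one (by linarith)]
    ring
  -- step 6 : final numeric bound
  have hs2 : (0:ℝ) < Real.sqrt (a-2) := Real.sqrt_pos.mpr (by linarith)
  have hs1 : (0:ℝ) < Real.sqrt (a-1) := Real.sqrt_pos.mpr (by linarith)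
  have hmul : Real.sqrt (a-2) * Real.sqrt (a-2) = a - 2 :=
    Real.mul_self_sqrt (by linarith)
  have hap : (0:ℝ) < a - 1 := by linarith
  have key : Real.sqrt π * Real.sqrt (a-1) ≤ 2 * Real.sqrt (a-2) := by
    have h4 : Real.sqrt (4*(a-2)) = 2*Real.sqrt (a-2) := by
      rw [show (4:ℝ)*(a-2) = 2^2*(a-2) by ring, Real.sqrt_mul (by positivity) (a-2),
        Real.sqrt_sq (by norm_num : (0:ℝ) ≤ 2)]
    rw [← Real.sqrt_mul pi_pos.le, ← h4]
    exact Real.sqrt_le_sqrt (by nlinarith [Real.pi_lt_d2])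
  have hrhs : (3 : ℝ) ^ ((3 : ℝ) / 2) / (2 * ((p : ℝ) - 6) ^ ((3 : ℝ) / 2))
      = 1 / (2 * (a-1) * Real.sqrt (a-1)) := by
    have hp6 : (p:ℝ) - 6 = 3 * (a-1) := by rw [ha]; ring
    rw [hp6, Real.mul_rpow (by norm_num) (by linarith),
      show ((3:ℝ)/2) = 1 + (1/2 : ℝ) by norm_num,
      Real.rpow_add (show (0:ℝ) < a - 1 by linarith), Real.rpow_one,
      ← Real.sqrt_eq_rpow]
    have h3 : (0:ℝ) < (3:ℝ) ^ ((1:ℝ) + 1/2) := Real.rpow_pos_of_pos (by norm_num) _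
    field_simp
  calc (∫ x in (0:ℝ)..1, x ^ 2 * (1 + x ^ 2) ^ (-a))
      = ∫ t in (0:ℝ)..(1/2:ℝ), g t := by rw [step1, step2]
    _ ≤ ∫ t in (0:ℝ)..1, g t := step3
    _ = 2⁻¹ * (Real.Gamma (3/2) * Real.Gamma (a - 3/2) / Real.Gamma a) := step4
    _ ≤ 1 / (2 * (a-1) * Real.sqrt (a-1)) := by
        rw [hG32, hGa]
        have hD : (0:ℝ) < (a-1)*(a-2)*Real.Gamma (a-2) := by
          apply mul_pos (mul_pos (by linarith) (by linarith)) hΓ2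
        have e : 2⁻¹ * (Real.sqrt π / 2 * Real.Gamma (a - 3/2) / ((a-1)*(a-2)*Real.Gamma (a-2)))
            = (Real.sqrt π * Real.Gamma (a - 3/2) / 4) / ((a-1)*(a-2)*Real.Gamma (a-2)) := by
          ring
        rw [e, div_le_div_iff₀ hD (mul_pos (mul_pos two_pos hap) hs1)]
        calc Real.sqrt π * Real.Gamma (a - 3/2) / 4 * (2 * (a-1) * Real.sqrt (a-1))
            = (a-1)/2 * (Real.Gamma (a - 3/2) * (Real.sqrt π * Real.sqrt (a-1))) := by ring
          _ ≤ (a-1)/2 * ((Real.Gamma (a-2) * Real.sqrt (a-2)) * (2 * Real.sqrt (a-2))) := by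
              apply mul_le_mul_of_nonneg_left _ (by linarith : (0:ℝ) ≤ (a-1)/2)
              exact mul_le_mul hmid key (by positivity) (mul_nonneg hΓ2.le hs2.le)
          _ = (a-1)*(a-2)*Real.Gamma (a-2) := by
              have h2 : (Real.Gamma (a-2) * Real.sqrt (a-2)) * (2 * Real.sqrt (a-2))
                  = 2 * Real.Gamma (a-2) * (Real.sqrt (a-2) * Real.sqrt (a-2)) := by ring
              rw [h2, hmul]
              ring
          _ = 1 * ((a-1)*(a-2)*Real.Gamma (a-2)) := by ring
    _ = (3 : ℝ) ^ ((3 : ℝ) / 2) / (2 * ((p : ℝ) - 6) ^ ((3 : ℝ) / 2)) := hrhs.symm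
end
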